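/- Let X_1, …, X_n be independent random variables taking values in (−∞, ∞] such that for every real t and all distinct indices i, j, the probability that X_i = t and X_j = t simultaneously is zero. Then either the probability that X_i = ∞ for all i is greater than e^{−1}, or there exists a real number t_0 such that the probability that exactly one of the X_i is less than or equal to t_0 is at least 1/5. -/

import Mathlib

open MeasureTheory ProbabilityTheory Set Filter
open scoped ENNReal Topology

/-- Let `X 1, …, X n` be independent random variables with values in
`(-∞, ∞]` such that for every real `t` and all distinct `i, j`, the probability that
`X i = X j = t` is zero.  Then either the probability that all `X i` are `∞` is greater
than `e⁻¹`, or there is a real `t₀` such that, with probability at least `1/5`, exactly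
one of the `X i` is `≤ t₀`. -/
theorem exists_unique_winner {Ω : Type*} [MeasurableSpace Ω]
    (μ : Measure Ω) [IsProbabilityMeasure μ] (n : ℕ) (X : Fin n → Ω → EReal)
    (hXmeas : ∀ i, Measurable (X i))
    (hXne_bot : ∀ i ω, X i ω ≠ ⊥)
    (hind : iIndepFun X μ)
    (hdistinct : ∀ (t : ℝ) (i j : Fin n), i ≠ j →
      μ {ω | X i ω = (t : EReal) ∧ X j ω = (t : EReal)} = 0) :
    ENNReal.ofReal (Real.exp (-1)) < μ {ω | ∀ i, X i ω = ⊤} ∨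
      ∃ t₀ : ℝ, (1 / 5 : ℝ≥0∞) ≤ μ {ω | ∃! i, X i ω ≤ (t₀ : EReal)} := by
  classical
  -- numeral bridges
  have h15 : (1/5:ℝ≥0∞) = ENNReal.ofReal (1/5) := by
    rw [ENNReal.ofReal_div_of_pos (by norm_num)]; norm_num
  have h25 : (2/5:ℝ≥0∞) = ENNReal.ofReal (2/5) := by
    rw [ENNReal.ofReal_div_of_pos (by norm_num)]; norm_num
  have h310 : (3/10:ℝ≥0∞) = ENNReal.ofReal (3/10) := by
    rw [ENNReal.ofReal_div_of_pos (by norm_num)]; norm_num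
  have h710 : (7/10:ℝ≥0∞) = ENNReal.ofReal (7/10) := by
    rw [ENNReal.ofReal_div_of_pos (by norm_num)]; norm_num
  by_cases hall : ENNReal.ofReal (Real.exp (-1)) < μ {ω | ∀ i, X i ω = ⊤}
  · exact Or.inl hall
  right
  push_neg at hall
  -- the survival sets and function
  set G : ℝ → Set Ω := fun t => {ω | ∀ i, (t:EReal) < X i ω} with hGdef
  have hGmeas : ∀ t, MeasurableSet (G t) := by
    intro t
    have : G t = ⋂ i, X i ⁻¹' Set.Ioi (t:EReal) := by
      ext ω; simp [hGdef, Set.mem_iInter, Set.mem_preimage]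
    rw [this]
    exact MeasurableSet.iInter fun i => (hXmeas i) measurableSet_Ioi
  have hGanti : Antitone G := by
    intro s t hst ω hω i
    exact lt_of_le_of_lt (EReal.coe_le_coe_iff.mpr hst) (hω i)
  set Q : ℝ → ℝ≥0∞ := fun t => μ (G t) with hQdef
  have hQanti : Antitone Q := fun s t hst => measure_mono (hGanti hst)
  -- exp(-1) < 7/10
  have hexp : ENNReal.ofReal (Real.exp (-1)) < 7/10 := by
    rw [h710, Real.exp_neg]
    apply ENNReal.ofReal_lt_ofReal_iff (by norm_num) |>.mpr
    have := Real.exp_one_gt_d9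
    rw [inv_lt_comm₀ (by positivity) (by norm_num)]
    linarith
  -- limit at +∞ : the set {t | Q t ≤ 7/10} is nonempty
  have hStop : ∃ t : ℝ, Q t ≤ 7/10 := by
    have hseq : Tendsto (fun k : ℕ => Q (k:ℝ)) atTop (𝓝 (μ {ω | ∀ i, X i ω = ⊤})) := by
      have hiInter : (⋂ k : ℕ, G (k:ℝ)) = {ω | ∀ i, X i ω = ⊤} := by
        ext ω
        simp only [Set.mem_iInter, hGdef, Set.mem_setOf_eq]
        constructor
        · intro h i
          rw [EReal.eq_top_iff_forall_lt]
          intro y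
          obtain ⟨k, hk⟩ := exists_nat_gt y
          exact lt_trans (EReal.coe_lt_coe_iff.mpr hk) (h k i)
        · intro h k i
          rw [h i]; exact EReal.coe_lt_top _
      have := tendsto_measure_iInter_atTop (μ := μ)
        (s := fun k : ℕ => G (k:ℝ)) (fun k => (hGmeas _).nullMeasurableSet)
        (fun a b hab => hGanti (Nat.cast_le.mpr hab)) ⟨0, measure_ne_top _ _⟩
      rwa [hiInter] at this
    have hlt : μ {ω | ∀ i, X i ω = ⊤} < 7/10 := lt_of_le_of_lt hall hexp
    obtain ⟨k, hk⟩ := (hseq.eventually_lt_const hlt).exists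
    exact ⟨k, le_of_lt hk⟩
  -- boundedness below of {t | Q t ≤ 7/10}
  have hSbdd : BddBelow {t : ℝ | Q t ≤ 7/10} := by
    have hseq : Tendsto (fun k : ℕ => Q (-(k:ℝ))) atTop (𝓝 (μ (⋃ k : ℕ, G (-(k:ℝ))))) := by
      exact tendsto_measure_iUnion_atTop
        (fun a b hab => hGanti (by exact neg_le_neg (Nat.cast_le.mpr hab)))
    have hU : (⋃ k : ℕ, G (-(k:ℝ))) = Set.univ := by
      ext ω
      simp only [Set.mem_iUnion, hGdef, Set.mem_setOf_eq, Set.mem_univ, iff_true]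
      -- for each i, pick a real below X i ω
      have hr : ∀ i : Fin n, ∃ k : ℕ, (-(k:ℝ) : EReal) < X i ω := by
        intro i
        rcases eq_or_ne (X i ω) ⊤ with h | h
        · exact ⟨0, by rw [h]; exact EReal.coe_lt_top _⟩
        · obtain ⟨k, hk⟩ := exists_nat_gt (-(X i ω).toReal)
          refine ⟨k, ?_⟩
          rw [← EReal.coe_toReal h (hXne_bot i ω)]
          exact_mod_cast (by linarith : -(k:ℝ) < (X i ω).toReal)
      choose f hf using hr
      obtain ⟨K, hK⟩ := Finite.exists_le f
      refine ⟨K, fun i => lt_of_le_of_lt ?_ (hf i)⟩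
      have : (-(K:ℝ)) ≤ -(f i:ℝ) := neg_le_neg (Nat.cast_le.mpr (hK i))
      exact EReal.coe_le_coe_iff.mpr this
    rw [hU] at hseq
    have h1 : (7/10:ℝ≥0∞) < μ (Set.univ : Set Ω) := by
      rw [measure_univ, h710]
      calc ENNReal.ofReal (7/10) < ENNReal.ofReal 1 :=
        ENNReal.ofReal_lt_ofReal_iff (by norm_num) |>.mpr (by norm_num)
      _ = 1 := ENNReal.ofReal_one
    obtain ⟨k₀, hk₀⟩ := (hseq.eventually_const_lt h1).exists
    refine ⟨-(k₀:ℝ), fun t ht => ?_⟩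
    by_contra hlt
    push_neg at hlt
    exact absurd (le_trans (hQanti (le_of_lt hlt)) ht) (not_le.mpr hk₀)
  set S : Set ℝ := {t : ℝ | Q t ≤ 7/10} with hSdef
  set t₀ : ℝ := sInf S with ht₀def
  -- right continuity: Q t₀ ≤ 7/10
  have hQle : ∀ s : ℝ, t₀ < s → Q s ≤ 7/10 := by
    intro s hs
    obtain ⟨r, hrS, hrs⟩ := (csInf_lt_iff hSbdd hStop).mp hs
    exact le_trans (hQanti (le_of_lt hrs)) hrS
  have hQt₀ : Q t₀ ≤ 7/10 := by
    have hU : G t₀ = ⋃ k : ℕ, G (t₀ + 1/(k+1)) := by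
      ext ω
      simp only [Set.mem_iUnion, hGdef, Set.mem_setOf_eq]
      constructor
      · intro h
        have hk : ∀ i : Fin n, ∃ k : ℕ, ((t₀ + 1/(k+1) : ℝ) : EReal) < X i ω := by
          intro i
          rcases eq_or_ne (X i ω) ⊤ with hto | hto
          · exact ⟨0, by rw [hto]; exact EReal.coe_lt_top _⟩
          · have hx : (t₀ : EReal) < X i ω := h i
            have hxr : t₀ < (X i ω).toReal := by
              rw [← EReal.coe_toReal hto (hXne_bot i ω)] at hx
              exact_mod_cast hx
            obtain ⟨k, hk⟩ := exists_nat_one_div_lt (sub_pos.mpr hxr)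
            refine ⟨k, ?_⟩
            rw [← EReal.coe_toReal hto (hXne_bot i ω)]
            exact_mod_cast (by linarith : t₀ + 1/(k+1) < (X i ω).toReal)
        choose f hf using hk
        obtain ⟨K, hK⟩ := Finite.exists_le f
        refine ⟨K, fun i => lt_of_le_of_lt ?_ (hf i)⟩
        have h1 : ((f i : ℝ)+1) ≤ (K:ℝ)+1 := by
          have := (Nat.cast_le (α := ℝ)).mpr (hK i); linarith
        have h2 : (0:ℝ) < (f i : ℝ)+1 := by positivity
        have h3 : t₀ + 1/((K:ℝ)+1) ≤ t₀ + 1/((f i : ℝ)+1) := by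
          have := one_div_le_one_div_of_le h2 h1; linarith
        exact EReal.coe_le_coe_iff.mpr h3
      · rintro ⟨k, hk⟩ i
        refine lt_of_le_of_lt ?_ (hk i)
        exact EReal.coe_le_coe_iff.mpr (le_add_of_nonneg_right (by positivity))
    have hmono : Monotone (fun k : ℕ => G (t₀ + 1/((k:ℝ)+1))) := by
      intro a b hab
      apply hGanti
      have h1 : ((a:ℝ)+1) ≤ (b:ℝ)+1 := by exact_mod_cast Nat.succ_le_succ hab
      have h2 : (0:ℝ) < (a:ℝ)+1 := by positivity
      have := one_div_le_one_div_of_le h2 h1; linarith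
    have : Q t₀ = ⨆ k : ℕ, Q (t₀ + 1/((k:ℝ)+1)) := by
      rw [hQdef]; simp only; rw [hU, hmono.measure_iUnion]
    rw [this]
    exact iSup_le fun k => hQle _ (lt_add_of_pos_right _ (by positivity))
  by_cases hQ3 : (3/10:ℝ≥0∞) ≤ Q t₀
  · -- Case A : no big jump, use independence
    refine ⟨t₀, ?_⟩
    set f : Fin n → Fin n → Set Ω :=
      fun i j => X j ⁻¹' (if j = i then Set.Iic (t₀:EReal) else Set.Ioi (t₀:EReal)) with hfdef
    have hfcomap : ∀ i j, MeasurableSet[MeasurableSpace.comap (X j) inferInstance] (f i j) := by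
      intro i j
      exact ⟨_, by split <;> [exact measurableSet_Iic; exact measurableSet_Ioi], rfl⟩
    have hfmeas : ∀ i j, MeasurableSet (f i j) := by
      intro i j
      exact (hXmeas j) (by split <;> [exact measurableSet_Iic; exact measurableSet_Ioi])
    set E : Fin n → Set Ω := fun i => ⋂ j, f i j with hEdef
    have hEmeas : ∀ i, MeasurableSet (E i) := fun i => MeasurableSet.iInter fun j => hfmeas i j
    have hmemE : ∀ i ω, ω ∈ E i ↔ (X i ω ≤ (t₀:EReal) ∧ ∀ j, j ≠ i → (t₀:EReal) < X j ω) := by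
      intro i ω
      simp only [hEdef, Set.mem_iInter, hfdef, Set.mem_preimage]
      constructor
      · intro h
        refine ⟨by simpa using h i, fun j hj => by have := h j; rwa [if_neg hj] at this⟩
      · rintro ⟨h1, h2⟩ j
        by_cases hji : j = i
        · subst hji; simpa using h1
        · rw [if_neg hji]; exact h2 j hji
    -- E i are pairwise disjoint
    have hdisj : Pairwise (Function.onFun Disjoint E) := by
      intro i j hij
      rw [Function.onFun, Set.disjoint_left]
      intro ω hωi hωj
      have h1 := ((hmemE i ω).mp hωi).2 j (Ne.symm hij)
      have h2 := ((hmemE j ω).mp hωj).1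
      exact absurd h2 (not_le.mpr h1)
    -- each E i is inside the target
    have hEsub : ∀ i, E i ⊆ {ω | ∃! i, X i ω ≤ (t₀ : EReal)} := by
      intro i ω hω
      obtain ⟨h1, h2⟩ := (hmemE i ω).mp hω
      refine ⟨i, h1, fun j hj => ?_⟩
      by_contra hne
      exact absurd hj (not_le.mpr (h2 j hne))
    -- independence : μ (E i) = μ (A i) * μ (C i)
    have hprod : ∀ i, μ (E i) = μ (X i ⁻¹' Set.Iic (t₀:EReal)) * μ (⋂ j ∈ Finset.univ.erase i, f i j) := by
      intro i
      have h1 : μ (E i) = ∏ j, μ (f i j) := hind.meas_iInter (hfcomap i)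
      have h2 : μ (⋂ j ∈ Finset.univ.erase i, f i j) = ∏ j ∈ Finset.univ.erase i, μ (f i j) :=
        hind.meas_biInter (fun j _ => hfcomap i j)
      rw [h1, h2, ← Finset.mul_prod_erase Finset.univ _ (Finset.mem_univ i)]
      congr 1
      simp [hfdef]
    have hCge : ∀ i, Q t₀ ≤ μ (⋂ j ∈ Finset.univ.erase i, f i j) := by
      intro i
      apply measure_mono
      intro ω hω
      simp only [Set.mem_iInter]
      intro j hj
      simp only [Finset.mem_erase] at hj
      simp only [hfdef, Set.mem_preimage, if_neg hj.1]
      exact hω j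
    -- sum of μ (A i) ≥ 1 - Q t₀
    have hsum : 1 ≤ (∑ i, μ (X i ⁻¹' Set.Iic (t₀:EReal))) + Q t₀ := by
      have hcover : (Set.univ : Set Ω) ⊆ (⋃ i, X i ⁻¹' Set.Iic (t₀:EReal)) ∪ G t₀ := by
        intro ω _
        by_cases h : ∃ i, X i ω ≤ (t₀:EReal)
        · obtain ⟨i, hi⟩ := h
          exact Or.inl (Set.mem_iUnion.mpr ⟨i, hi⟩)
        · push_neg at h
          exact Or.inr (fun i => h i)
      calc (1:ℝ≥0∞) = μ Set.univ := (measure_univ).symm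
        _ ≤ μ ((⋃ i, X i ⁻¹' Set.Iic (t₀:EReal)) ∪ G t₀) := measure_mono hcover
        _ ≤ μ (⋃ i, X i ⁻¹' Set.Iic (t₀:EReal)) + μ (G t₀) := measure_union_le _ _
        _ ≤ (∑ i, μ (X i ⁻¹' Set.Iic (t₀:EReal))) + Q t₀ := by
            gcongr
            exact measure_iUnion_fintype_le _ _
    -- put everything together
    have hkey : (1 - Q t₀) * Q t₀ ≤ μ {ω | ∃! i, X i ω ≤ (t₀ : EReal)} := by
      calc (1 - Q t₀) * Q t₀ ≤ (∑ i, μ (X i ⁻¹' Set.Iic (t₀:EReal))) * Q t₀ := by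
            gcongr
            exact tsub_le_iff_right.mpr hsum
        _ = ∑ i, μ (X i ⁻¹' Set.Iic (t₀:EReal)) * Q t₀ := Finset.sum_mul _ _ _
        _ ≤ ∑ i, μ (E i) := by
            apply Finset.sum_le_sum
            intro i _
            rw [hprod i]
            exact mul_le_mul_right (hCge i) _
        _ = μ (⋃ i, E i) := by rw [measure_iUnion hdisj hEmeas, tsum_fintype]
        _ ≤ μ {ω | ∃! i, X i ω ≤ (t₀ : EReal)} := measure_mono (Set.iUnion_subset hEsub)
    refine le_trans ?_ hkey
    -- numeric : 1/5 ≤ (1 - q) q for q ∈ [3/10, 7/10]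
    have hqne : Q t₀ ≠ ⊤ := measure_ne_top _ _
    set q : ℝ := (Q t₀).toReal with hqdef
    have hq1 : (3/10:ℝ) ≤ q := by
      rw [hqdef, ← ENNReal.ofReal_le_iff_le_toReal hqne, ← h310]; exact hQ3
    have hq2 : q ≤ 7/10 := by
      have := ENNReal.toReal_mono (by rw [h710]; exact ENNReal.ofReal_ne_top) hQt₀
      rwa [h710, ENNReal.toReal_ofReal (by norm_num)] at this
    have hQeq : Q t₀ = ENNReal.ofReal q := (ENNReal.ofReal_toReal hqne).symm
    rw [h15, hQeq, ← ENNReal.ofReal_one, ← ENNReal.ofReal_sub _ ENNReal.toReal_nonneg,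
      ← ENNReal.ofReal_mul (by linarith)]
    exact ENNReal.ofReal_le_ofReal (by nlinarith)
  · -- Case B : big jump at t₀, use the no-tie hypothesis
    push_neg at hQ3
    refine ⟨t₀, ?_⟩
    set R : ℝ≥0∞ := μ {ω | ∀ i, (t₀:EReal) ≤ X i ω} with hRdef
    have hIeq : {ω | ∀ i, (t₀:EReal) ≤ X i ω} = ⋂ k : ℕ, G (t₀ - 1/((k:ℝ)+1)) := by
      ext ω
      simp only [Set.mem_iInter, hGdef, Set.mem_setOf_eq]
      constructor
      · intro h k i
        refine lt_of_lt_of_le ?_ (h i)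
        exact EReal.coe_lt_coe_iff.mpr (sub_lt_self _ (by positivity))
      · intro h i
        by_contra hlt
        push_neg at hlt
        have hne_top : X i ω ≠ ⊤ := by
          intro htop
          rw [htop] at hlt
          exact absurd hlt (not_lt.mpr le_top)
        have hxr : (X i ω).toReal < t₀ := by
          rw [← EReal.coe_toReal hne_top (hXne_bot i ω)] at hlt
          exact_mod_cast hlt
        obtain ⟨k, hk⟩ := exists_nat_one_div_lt (sub_pos.mpr hxr)
        have := h k i
        rw [← EReal.coe_toReal hne_top (hXne_bot i ω)] at this
        have : t₀ - 1/((k:ℝ)+1) < (X i ω).toReal := by exact_mod_cast this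
        linarith
    have hRge : (7/10:ℝ≥0∞) ≤ R := by
      have hanti : Antitone (fun k : ℕ => G (t₀ - 1/((k:ℝ)+1))) := by
        intro a b hab
        apply hGanti
        have h1 : ((a:ℝ)+1) ≤ (b:ℝ)+1 := by exact_mod_cast Nat.succ_le_succ hab
        have h2 : (0:ℝ) < (a:ℝ)+1 := by positivity
        have := one_div_le_one_div_of_le h2 h1; linarith
      have := hanti.measure_iInter (μ := μ) (fun k => (hGmeas _).nullMeasurableSet)
        ⟨0, measure_ne_top _ _⟩
      rw [hRdef, hIeq, this]
      refine le_iInf fun k => ?_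
      by_contra hlt
      push_neg at hlt
      have hmem : t₀ - 1/((k:ℝ)+1) ∈ S := le_of_lt hlt
      have := csInf_le hSbdd hmem
      rw [← ht₀def] at this
      have hpos : (0:ℝ) < 1/((k:ℝ)+1) := by positivity
      linarith
    -- the difference set
    set D : Set Ω := {ω | ∀ i, (t₀:EReal) ≤ X i ω} \ G t₀ with hDdef
    have hDmeasure : (2/5:ℝ≥0∞) ≤ μ D := by
      have hsub : G t₀ ⊆ {ω | ∀ i, (t₀:EReal) ≤ X i ω} := fun ω hω i => le_of_lt (hω i)
      rw [hDdef, measure_diff hsub (hGmeas _).nullMeasurableSet (measure_ne_top _ _), ← hRdef]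
      refine ENNReal.le_sub_of_add_le_right (measure_ne_top _ _) ?_
      calc (2/5:ℝ≥0∞) + Q t₀ ≤ 2/5 + 3/10 := by exact add_le_add le_rfl (le_of_lt hQ3)
        _ = 7/10 := by
            rw [h25, h310, h710, ← ENNReal.ofReal_add (by norm_num) (by norm_num)]
            norm_num
        _ ≤ R := hRge
    -- the null set of ties
    set N : Set Ω := ⋃ i, ⋃ j, ⋃ (_ : i ≠ j), {ω | X i ω = (t₀:EReal) ∧ X j ω = (t₀:EReal)}
      with hNdef
    have hNnull : μ N = 0 := by
      rw [hNdef]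
      refine measure_iUnion_null fun i => measure_iUnion_null fun j => ?_
      refine measure_iUnion_null fun h => hdistinct t₀ i j h
    have hDsub : D ⊆ {ω | ∃! i, X i ω ≤ (t₀ : EReal)} ∪ N := by
      intro ω hω
      obtain ⟨hge, hnot⟩ := hω
      simp only [hGdef, Set.mem_setOf_eq, not_forall, not_lt] at hnot
      obtain ⟨i, hi⟩ := hnot
      have hieq : X i ω = (t₀:EReal) := le_antisymm hi (hge i)
      by_cases hex : ∃ j, j ≠ i ∧ X j ω = (t₀:EReal)
      · obtain ⟨j, hji, hj⟩ := hex
        refine Or.inr ?_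
        rw [hNdef]
        simp only [Set.mem_iUnion]
        exact ⟨i, j, Ne.symm hji, hieq, hj⟩
      · push_neg at hex
        refine Or.inl ⟨i, le_of_eq hieq, fun j hj => ?_⟩
        by_contra hne
        exact hex j hne (le_antisymm hj (hge j))
    calc (1/5:ℝ≥0∞) ≤ 2/5 := by
          rw [h15, h25]; exact ENNReal.ofReal_le_ofReal (by norm_num)
      _ ≤ μ D := hDmeasure
      _ ≤ μ ({ω | ∃! i, X i ω ≤ (t₀ : EReal)} ∪ N) := measure_mono hDsub
      _ ≤ μ {ω | ∃! i, X i ω ≤ (t₀ : EReal)} + μ N := measure_union_le _ _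
      _ = μ {ω | ∃! i, X i ω ≤ (t₀ : EReal)} := by rw [hNnull, add_zero]
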